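/- Let m ≥ 1 be an integer, set M = 2^m − 1, and let t = arcsin(√((M+1)/(2M))). Let H₂ = (1/√2)·[[1,1],[1,−1]] be the Hadamard matrix and let H = H₂^{⊗m} be its m-fold Kronecker power, a Hermitian unitary 2^m × 2^m matrix. Then the matrix V = exp(−i t H) is unitary, its (0,0) entry satisfies |V₀₀|² = 1/2, and for every index j ≠ 0 in the first column, |V_{j0}|² = 1/(2M). -/

import Mathlib

open NormedSpace
open scoped Matrix

/-- The Hadamard matrix `H₂ = (1/√2)·[[1,1],[1,−1]]`. -/
noncomputable def hadamard2 : Matrix (Fin 2) (Fin 2) ℂ :=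
  ((Real.sqrt 2 : ℂ))⁻¹ • !![1, 1; 1, -1]

/-- The `m`-fold Kronecker power of the Hadamard matrix, indexed by `m`-tuples of bits
(with `fun _ => 0` the all-zeros index playing the role of the index `0`). -/
noncomputable def hadamardPow (m : ℕ) : Matrix (Fin m → Fin 2) (Fin m → Fin 2) ℂ :=
  fun x y => ∏ i : Fin m, hadamard2 (x i) (y i)

lemma exp_smul_invol {n : Type*} [Fintype n] [DecidableEq n]
    (H : Matrix n n ℂ) (hH : H * H = 1) (c : ℂ) :
    exp (c • H) = ((Complex.exp c + Complex.exp (-c)) / 2) • (1 : Matrix n n ℂ)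
      + ((Complex.exp c - Complex.exp (-c)) / 2) • H := by
  letI : SeminormedRing (Matrix n n ℂ) := Matrix.linftyOpSemiNormedRing
  letI : NormedRing (Matrix n n ℂ) := Matrix.linftyOpNormedRing
  letI : NormedAlgebra ℂ (Matrix n n ℂ) := Matrix.linftyOpNormedAlgebra
  set P : Matrix n n ℂ := (2:ℂ)⁻¹ • (1 + H) with hP
  set Q : Matrix n n ℂ := (2:ℂ)⁻¹ • (1 - H) with hQ
  have e1 : (1 + H) * (1 + H) = (2:ℂ) • (1 + H) := by
    simp only [mul_add, add_mul, one_mul, mul_one, hH]; module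
  have e2 : (1 - H) * (1 - H) = (2:ℂ) • (1 - H) := by
    simp only [mul_sub, sub_mul, one_mul, mul_one, hH]; module
  have e3 : (1 + H) * (1 - H) = 0 := by
    simp only [mul_sub, add_mul, one_mul, mul_one, hH]; module
  have e4 : (1 - H) * (1 + H) = 0 := by
    simp only [mul_add, sub_mul, one_mul, mul_one, hH]; module
  have hP2 : P * P = P := by
    rw [hP, smul_mul_assoc, mul_smul_comm, e1]; module
  have hQ2 : Q * Q = Q := by
    rw [hQ, smul_mul_assoc, mul_smul_comm, e2]; module
  have hPQ : P * Q = 0 := by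
    rw [hP, hQ, smul_mul_assoc, mul_smul_comm, e3]; simp
  have hQP : Q * P = 0 := by
    rw [hP, hQ, smul_mul_assoc, mul_smul_comm, e4]; simp
  have hPQ1 : P + Q = 1 := by rw [hP, hQ]; module
  let ψ : (ℂ × ℂ) →ₐ[ℂ] Matrix n n ℂ :=
  { toFun := fun p => p.1 • P + p.2 • Q
    map_one' := by simpa using hPQ1
    map_mul' := by
      intro p q
      simp only [Prod.fst_mul, Prod.snd_mul, add_mul, mul_add, smul_mul_assoc, mul_smul_comm,
        hP2, hQ2, hPQ, hQP, smul_zero, add_zero, zero_add]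
      module
    map_zero' := by simp
    map_add' := by intro p q; simp only [Prod.fst_add, Prod.snd_add, add_smul]; abel
    commutes' := by
      intro r
      show r • P + r • Q = _
      rw [← smul_add, hPQ1]
      simp [Algebra.algebraMap_eq_smul_one] }
  have hcont : Continuous ψ := by
    show Continuous fun p : ℂ × ℂ => p.1 • P + p.2 • Q
    fun_prop
  have key : ψ (c, -c) = c • H := by
    show c • P + (-c) • Q = c • H
    rw [hP, hQ]; module
  have hmap := map_exp ψ hcont (c, -c)
  rw [key] at hmap
  refine hmap.symm.trans ?_
  have hexp : exp ((c, -c) : ℂ × ℂ) = (Complex.exp c, Complex.exp (-c)) := by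
    refine Prod.ext ?_ ?_
    · rw [Prod.fst_exp, ← Complex.exp_eq_exp_ℂ]
    · rw [Prod.snd_exp, ← Complex.exp_eq_exp_ℂ]
  rw [hexp]
  show Complex.exp c • P + Complex.exp (-c) • Q = _
  rw [hP, hQ]; module

lemma sqrt2_mul_self : ((Real.sqrt 2 : ℝ) : ℂ) * ((Real.sqrt 2 : ℝ) : ℂ) = 2 := by
  norm_cast
  rw [Real.mul_self_sqrt] <;> norm_num

lemma hadamard2_mul_self : hadamard2 * hadamard2 = 1 := by
  have h2 : ((Real.sqrt 2 : ℝ) : ℂ)⁻¹ * ((Real.sqrt 2 : ℝ) : ℂ)⁻¹ = (2:ℂ)⁻¹ := by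
    rw [← mul_inv, sqrt2_mul_self]
  ext i j
  rw [Matrix.mul_apply, Fin.sum_univ_two]
  fin_cases i <;> fin_cases j <;>
    simp [hadamard2, Matrix.one_apply] <;>
    · ring_nf
      rw [show ((Real.sqrt 2 : ℝ) : ℂ)⁻¹ ^ 2 = ((Real.sqrt 2 : ℝ) : ℂ)⁻¹ * ((Real.sqrt 2 : ℝ) : ℂ)⁻¹ by ring, h2]
      norm_num

lemma hadamard2_conj (a b : Fin 2) : (starRingEnd ℂ) (hadamard2 a b) = hadamard2 b a := by
  fin_cases a <;> fin_cases b <;>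
    simp [hadamard2, map_inv₀, Complex.conj_ofReal]

lemma hadamardPow_mul_self (m : ℕ) : hadamardPow m * hadamardPow m = 1 := by
  ext x y
  rw [Matrix.mul_apply]
  simp_rw [hadamardPow, ← Finset.prod_mul_distrib]
  rw [← Fintype.prod_sum fun i z => hadamard2 (x i) z * hadamard2 z (y i)]
  have h1 : ∀ i : Fin m, ∑ z : Fin 2, hadamard2 (x i) z * hadamard2 z (y i)
      = (1 : Matrix (Fin 2) (Fin 2) ℂ) (x i) (y i) := by
    intro i; rw [← Matrix.mul_apply, hadamard2_mul_self]
  simp_rw [h1]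
  by_cases h : x = y
  · subst h; simp [Matrix.one_apply]
  · rw [Matrix.one_apply_ne h]
    obtain ⟨i, hi⟩ := Function.ne_iff.mp h
    exact Finset.prod_eq_zero (Finset.mem_univ i) (Matrix.one_apply_ne hi)

lemma hadamardPow_conjTranspose (m : ℕ) : (hadamardPow m)ᴴ = hadamardPow m := by
  ext x y
  rw [Matrix.conjTranspose_apply, hadamardPow, hadamardPow]
  rw [show (star (∏ i : Fin m, hadamard2 (y i) (x i)) : ℂ)
      = (starRingEnd ℂ) (∏ i : Fin m, hadamard2 (y i) (x i)) from rfl, map_prod]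
  exact Finset.prod_congr rfl fun i _ => hadamard2_conj _ _

lemma hadamardPow_apply_zero (m : ℕ) (j : Fin m → Fin 2) :
    hadamardPow m j (fun _ => 0) = ((((Real.sqrt 2 : ℝ))⁻¹ ^ m : ℝ) : ℂ) := by
  have h1 : ∀ a : Fin 2, hadamard2 a 0 = ((Real.sqrt 2 : ℝ) : ℂ)⁻¹ := by
    intro a; fin_cases a <;> simp [hadamard2]
  rw [hadamardPow]
  push_cast
  simp [h1]

/-- With `M = 2^m − 1` and `t = arcsin √((M+1)/(2M))`, the matrix `V = exp(−i t H₂^{⊗m})`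
is unitary, `|V₀₀|² = 1/2`, and `|V_{j0}|² = 1/(2M)` for every `j ≠ 0`. -/
theorem stmt_1 (m : ℕ) (hm : 1 ≤ m) (M : ℕ) (hM : M = 2 ^ m - 1)
    (t : ℝ) (ht : t = Real.arcsin (Real.sqrt ((M + 1) / (2 * M))))
    (V : Matrix (Fin m → Fin 2) (Fin m → Fin 2) ℂ)
    (hV : V = NormedSpace.exp ((-(Complex.I * (t : ℂ))) • hadamardPow m)) :
    V ∈ Matrix.unitaryGroup (Fin m → Fin 2) ℂ ∧
    ‖V (fun _ => 0) (fun _ => 0)‖^2 = 1 / 2 ∧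
    ∀ j : Fin m → Fin 2, j ≠ (fun _ => 0) →
      ‖V j (fun _ => 0)‖^2 = 1 / (2 * M) := by
  have hH := hadamardPow_mul_self m
  set c : ℂ := -(Complex.I * (t:ℂ)) with hc
  -- exponentials
  have hec : Complex.exp c = ((Real.cos t : ℝ) : ℂ) - ((Real.sin t : ℝ) : ℂ) * Complex.I := by
    rw [hc, show -(Complex.I * (t:ℂ)) = ((-(t:ℂ))) * Complex.I by ring, Complex.exp_mul_I,
      Complex.cos_neg, Complex.sin_neg, ← Complex.ofReal_cos, ← Complex.ofReal_sin]
    ring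
  have hecn : Complex.exp (-c) = ((Real.cos t : ℝ) : ℂ) + ((Real.sin t : ℝ) : ℂ) * Complex.I := by
    rw [hc, show -(-(Complex.I * (t:ℂ))) = ((t:ℂ)) * Complex.I by ring, Complex.exp_mul_I,
      ← Complex.ofReal_cos, ← Complex.ofReal_sin]
  -- the closed form of V
  have hVform : V = ((Real.cos t : ℝ) : ℂ) • (1 : Matrix (Fin m → Fin 2) (Fin m → Fin 2) ℂ)
      + (-((Real.sin t : ℝ) : ℂ) * Complex.I) • hadamardPow m := by
    rw [hV, exp_smul_invol _ hH c, hec, hecn]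
    congr 1
    · congr 1; ring
    · congr 1; ring
  have hstar : star V = ((Real.cos t : ℝ) : ℂ) • (1 : Matrix (Fin m → Fin 2) (Fin m → Fin 2) ℂ)
      + (((Real.sin t : ℝ) : ℂ) * Complex.I) • hadamardPow m := by
    rw [Matrix.star_eq_conjTranspose, hVform, Matrix.conjTranspose_add,
      Matrix.conjTranspose_smul, Matrix.conjTranspose_smul, Matrix.conjTranspose_one,
      hadamardPow_conjTranspose]
    congr 1
    · congr 1
      exact Complex.conj_ofReal _
    · congr 1
      simp only [star_mul', map_neg, Complex.conj_ofReal, Complex.star_def, Complex.conj_I]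
      ring
  have mulform : ∀ a b a' b' : ℂ,
      (a • (1 : Matrix (Fin m → Fin 2) (Fin m → Fin 2) ℂ) + b • hadamardPow m)
        * (a' • 1 + b' • hadamardPow m)
      = (a * a' + b * b') • 1 + (a * b' + b * a') • hadamardPow m := by
    intro a b a' b'
    simp only [add_mul, mul_add, smul_mul_assoc, mul_smul_comm, one_mul, mul_one, hH]
    module
  -- numeric facts
  have h2m : ((M:ℝ) + 1) = 2 ^ m := by
    rw [hM, Nat.cast_sub (Nat.one_le_two_pow)]
    push_cast
    ring
  have hM1 : 1 ≤ M := by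
    rw [hM]
    have : 2 ^ 1 ≤ 2 ^ m := Nat.pow_le_pow_right (by norm_num) hm
    omega
  have hMR : (1:ℝ) ≤ (M:ℝ) := by exact_mod_cast hM1
  have hMne : (M:ℝ) ≠ 0 := by positivity
  set x : ℝ := ((M:ℝ) + 1) / (2 * M) with hx
  have hx0 : 0 ≤ x := by positivity
  have hx1 : x ≤ 1 := by
    rw [hx, div_le_one (by positivity)]
    linarith
  have hsin : Real.sin t = Real.sqrt x := by
    rw [ht, Real.sin_arcsin (le_trans (by norm_num : (-1:ℝ) ≤ 0) (Real.sqrt_nonneg _))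
      (Real.sqrt_le_one.mpr hx1)]
  have hsin2 : Real.sin t ^ 2 = x := by rw [hsin, Real.sq_sqrt hx0]
  have hcos2 : Real.cos t ^ 2 = 1 - x := by
    have := Real.sin_sq_add_cos_sq t
    linarith [hsin2]
  set s : ℝ := (Real.sqrt 2)⁻¹ ^ m with hs
  have h22 : (Real.sqrt 2)⁻¹ ^ 2 = 2⁻¹ := by
    rw [inv_pow, sq, Real.mul_self_sqrt (by norm_num)]
  have hs2 : s ^ 2 = ((M:ℝ) + 1)⁻¹ := by
    rw [hs, ← pow_mul, mul_comm m 2, pow_mul, h22, inv_pow, ← h2m]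
  -- entries
  have hentry : ∀ j : Fin m → Fin 2, V j (fun _ => 0)
      = ((Real.cos t : ℝ) : ℂ) * (1 : Matrix (Fin m → Fin 2) (Fin m → Fin 2) ℂ) j (fun _ => 0)
        + ((-(Real.sin t * s) : ℝ) : ℂ) * Complex.I := by
    intro j
    rw [hVform]
    simp only [Matrix.add_apply, Matrix.smul_apply, smul_eq_mul, hadamardPow_apply_zero]
    push_cast [hs]
    ring
  refine ⟨?_, ?_, ?_⟩
  · -- unitarity
    rw [Matrix.mem_unitaryGroup_iff, hstar, hVform, mulform]
    have hpyth : ((Real.sin t : ℝ) : ℂ) ^ 2 + ((Real.cos t : ℝ) : ℂ) ^ 2 = 1 := by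
      exact_mod_cast Real.sin_sq_add_cos_sq t
    have hone : ((Real.cos t : ℝ) : ℂ) * ((Real.cos t : ℝ) : ℂ)
        + (-((Real.sin t : ℝ) : ℂ) * Complex.I) * (((Real.sin t : ℝ) : ℂ) * Complex.I) = 1 := by
      linear_combination hpyth - ((Real.sin t : ℝ) : ℂ) ^ 2 * Complex.I_sq
    have hzero : ((Real.cos t : ℝ) : ℂ) * (((Real.sin t : ℝ) : ℂ) * Complex.I)
        + (-((Real.sin t : ℝ) : ℂ) * Complex.I) * ((Real.cos t : ℝ) : ℂ) = 0 := by ring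
    rw [hone, hzero, zero_smul, add_zero, one_smul]
  · -- (0,0) entry
    rw [hentry, Matrix.one_apply_eq, mul_one, Complex.sq_norm, Complex.normSq_add_mul_I]
    rw [hcos2, neg_sq, mul_pow, hs2, hsin2, hx]
    field_simp
    ring
  · -- off-diagonal entries
    intro j hj
    rw [hentry, Matrix.one_apply_ne hj, mul_zero, zero_add]
    rw [norm_mul, Complex.norm_I, Complex.norm_real, mul_one, Real.norm_eq_abs, sq_abs]
    rw [neg_sq, mul_pow, hs2, hsin2, hx]
    field_simp
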